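/- Let n be a positive integer and σ_0 > 0. Define a set function f : 2^{[n]} → ℝ as follows: for S ⊆ [n], let f(S) = E[max_{i∈[n]} X_i], where the X_i are independent, X_i is Gaussian with mean 0 and variance σ_0² for i ∈ S, and X_i = 0 almost surely for i ∉ S (with f(∅) = 0). Then f is submodular: for all S, T ⊆ [n], f(S ∪ T) + f(S ∩ T) ≤ f(S) + f(T). -/

import Mathlib

open MeasureTheory ProbabilityTheory

open scoped NNReal ENNReal Real

section AuxSubmod

/-- Helper: the pointwise "max with zeros off `S`" function. -/
noncomputable def gmaxAux {n : ℕ} (S : Finset (Fin n)) (x : Fin n → ℝ) : ℝ :=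
  ⨆ i, if i ∈ S then x i else 0

lemma measurable_gmaxAux {n : ℕ} (S : Finset (Fin n)) : Measurable (gmaxAux S) := by
  apply Measurable.iSup fun i => ?_
  by_cases hi : i ∈ S
  · simp only [if_pos hi]; exact measurable_pi_apply i
  · simp only [if_neg hi]; exact measurable_const

lemma abs_gmaxAux_le {n : ℕ} (hn : 0 < n) (S : Finset (Fin n)) (x : Fin n → ℝ) :
    |gmaxAux S x| ≤ ∑ i, |x i| := by
  haveI : Nonempty (Fin n) := ⟨⟨0, hn⟩⟩
  have bdd : BddAbove (Set.range fun i => if i ∈ S then x i else 0) :=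
    (Set.finite_range _).bddAbove
  have hsum : (0:ℝ) ≤ ∑ i, |x i| := Finset.sum_nonneg fun j _ => abs_nonneg _
  rw [abs_le]
  constructor
  · obtain ⟨i0⟩ := (inferInstance : Nonempty (Fin n))
    refine le_trans ?_ (le_ciSup bdd i0)
    by_cases hi : i0 ∈ S
    · rw [if_pos hi]
      have h1 : |x i0| ≤ ∑ j, |x j| :=
        Finset.single_le_sum (f := fun j => |x j|) (fun j _ => abs_nonneg _)
          (Finset.mem_univ i0)
      linarith [neg_abs_le (x i0)]
    · rw [if_neg hi]; linarith
  · refine ciSup_le fun i => ?_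
    by_cases hi : i ∈ S
    · rw [if_pos hi]
      exact (le_abs_self _).trans
        (Finset.single_le_sum (f := fun j => |x j|) (fun j _ => abs_nonneg _)
          (Finset.mem_univ i))
    · rw [if_neg hi]; exact hsum

lemma gmaxAux_submod {n : ℕ} (hn : 0 < n) {S T : Finset (Fin n)}
    (hS : S ≠ Finset.univ) (hT : T ≠ Finset.univ) (x : Fin n → ℝ) :
    gmaxAux (S ∪ T) x + gmaxAux (S ∩ T) x ≤ gmaxAux S x + gmaxAux T x := by
  haveI : Nonempty (Fin n) := ⟨⟨0, hn⟩⟩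
  have bdd : ∀ U : Finset (Fin n),
      BddAbove (Set.range fun i => if i ∈ U then x i else 0) :=
    fun U => (Set.finite_range _).bddAbove
  have hterm : ∀ (U : Finset (Fin n)) i, (if i ∈ U then x i else 0) ≤ gmaxAux U x :=
    fun U i => le_ciSup (bdd U) i
  have hS0 : 0 ≤ gmaxAux S x := by
    have : ∃ j, j ∉ S := by
      by_contra h; push_neg at h; exact hS (Finset.eq_univ_iff_forall.mpr h)
    obtain ⟨j, hj⟩ := this
    have := hterm S j; rwa [if_neg hj] at this
  have hT0 : 0 ≤ gmaxAux T x := by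
    have : ∃ j, j ∉ T := by
      by_contra h; push_neg at h; exact hT (Finset.eq_univ_iff_forall.mpr h)
    obtain ⟨j, hj⟩ := this
    have := hterm T j; rwa [if_neg hj] at this
  have hST_le_S : gmaxAux (S ∩ T) x ≤ gmaxAux S x := by
    refine ciSup_le fun i => ?_
    by_cases hi : i ∈ S ∩ T
    · rw [if_pos hi]
      have h' := hterm S i; rwa [if_pos (Finset.mem_inter.mp hi).1] at h'
    · rw [if_neg hi]; exact hS0
  have hST_le_T : gmaxAux (S ∩ T) x ≤ gmaxAux T x := by
    refine ciSup_le fun i => ?_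
    by_cases hi : i ∈ S ∩ T
    · rw [if_pos hi]
      have h' := hterm T i; rwa [if_pos (Finset.mem_inter.mp hi).2] at h'
    · rw [if_neg hi]; exact hT0
  have key : gmaxAux (S ∪ T) x ≤ gmaxAux S x + gmaxAux T x - gmaxAux (S ∩ T) x := by
    refine ciSup_le fun i => ?_
    by_cases hiS : i ∈ S
    · rw [if_pos (Finset.mem_union_left _ hiS)]
      have h' := hterm S i; rw [if_pos hiS] at h'
      linarith
    · by_cases hiT : i ∈ T
      · rw [if_pos (Finset.mem_union_right _ hiT)]
        have h' := hterm T i; rw [if_pos hiT] at h'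
        linarith
      · rw [if_neg (by simp [hiS, hiT])]
        linarith
  linarith

lemma integrable_id_gaussianAux {v : ℝ≥0} (hv : v ≠ 0) :
    Integrable (fun x : ℝ => x) (gaussianReal 0 v) := by
  have hv' : (0:ℝ) < v := by exact_mod_cast pos_iff_ne_zero.mpr hv
  have hb : (0:ℝ) < (2 * (v:ℝ))⁻¹ := by positivity
  rw [gaussianReal_of_var_ne_zero _ hv, gaussianPDF_def,
    integrable_withDensity_iff (measurable_gaussianPDFReal 0 v).ennreal_ofReal
      (ae_of_all _ fun x => ENNReal.ofReal_lt_top)]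
  have h := (integrable_rpow_mul_exp_neg_mul_sq hb (by norm_num : (-1:ℝ) < 1)).const_mul
    (√(2 * Real.pi * v))⁻¹
  apply h.congr (ae_of_all _ fun x => ?_)
  show (√(2 * Real.pi * (v:ℝ)))⁻¹ * (x ^ (1:ℝ) * Real.exp (-(2 * (v:ℝ))⁻¹ * x ^ 2))
      = x * (ENNReal.ofReal (gaussianPDFReal 0 v x)).toReal
  rw [ENNReal.toReal_ofReal (gaussianPDFReal_nonneg 0 v x), gaussianPDFReal, Real.rpow_one,
    show -(x - 0)^2/(2*(v:ℝ)) = -(2*(v:ℝ))⁻¹ * x^2 from by field_simp; ring]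
  ring

lemma map_eval_piAux {n : ℕ} (ν : Measure ℝ) [IsProbabilityMeasure ν] (i : Fin n) :
    (Measure.pi fun _ : Fin n => ν).map (fun x => x i) = ν := by
  refine Measure.ext fun s hs => ?_
  rw [Measure.map_apply (measurable_pi_apply i) hs]
  have hpre : (fun x : Fin n → ℝ => x i) ⁻¹' s
      = Set.pi Set.univ (fun j => if j = i then s else Set.univ) := by
    ext x
    simp only [Set.mem_preimage, Set.mem_univ_pi]
    constructor
    · intro h j; by_cases hj : j = i <;> simp [hj, h]
    · intro h; have := h i; simpa using this
  rw [hpre, Measure.pi_pi]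
  simp [apply_ite ν, measure_univ]

lemma measurable_projAux {n : ℕ} (S : Finset (Fin n)) :
    Measurable (fun (x : Fin n → ℝ) i => if i ∈ S then x i else 0) := by
  refine measurable_pi_lambda _ fun i => ?_
  by_cases hi : i ∈ S
  · simp only [if_pos hi]; exact measurable_pi_apply i
  · simp only [if_neg hi]; exact measurable_const

end AuxSubmod

/-- For `S ⊆ [n]`, `gaussianOnSet n σ₀ S` is the joint law of independent random variables
`X i` with `X i ~ N(0, σ₀²)` for `i ∈ S` and `X i = 0` almost surely for `i ∉ S`. -/
noncomputable def gaussianOnSet (n : ℕ) (σ₀ : ℝ) (S : Finset (Fin n)) :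
    Measure (Fin n → ℝ) :=
  Measure.pi fun i =>
    if i ∈ S then gaussianReal 0 (Real.toNNReal (σ₀ ^ 2)) else Measure.dirac 0

lemma gaussianOnSet_eq_mapAux (n : ℕ) (σ₀ : ℝ) (S : Finset (Fin n)) :
    gaussianOnSet n σ₀ S
      = (Measure.pi fun _ : Fin n => gaussianReal 0 (Real.toNNReal (σ₀ ^ 2))).map
          (fun x i => if i ∈ S then x i else 0) := by
  classical
  haveI : ∀ i : Fin n, SigmaFinite
      (if i ∈ S then gaussianReal 0 (Real.toNNReal (σ₀ ^ 2)) else Measure.dirac 0) := by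
    intro i
    by_cases hi : i ∈ S
    · rw [if_pos hi]; infer_instance
    · rw [if_neg hi]; infer_instance
  unfold gaussianOnSet
  refine Measure.pi_eq
    (μ := fun i => if i ∈ S then gaussianReal 0 (Real.toNNReal (σ₀ ^ 2)) else Measure.dirac 0)
    fun s hs => ?_
  rw [Measure.map_apply (measurable_projAux S) (MeasurableSet.univ_pi hs)]
  have hpre : (fun (x : Fin n → ℝ) i => if i ∈ S then x i else 0) ⁻¹' Set.pi Set.univ s
      = Set.pi Set.univ
          (fun i => if i ∈ S then s i else if (0:ℝ) ∈ s i then Set.univ else ∅) := by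
    ext x
    simp only [Set.mem_preimage, Set.mem_univ_pi]
    refine forall_congr' fun i => ?_
    by_cases hi : i ∈ S <;> by_cases h0 : (0:ℝ) ∈ s i <;> simp [hi, h0]
  rw [hpre, Measure.pi_pi]
  refine Finset.prod_congr rfl fun i _ => ?_
  by_cases hi : i ∈ S
  · simp [hi]
  · by_cases h0 : (0:ℝ) ∈ s i <;>
      simp [hi, h0, Measure.dirac_apply' (0:ℝ) (hs i), Set.indicator_of_mem,
        Set.indicator_of_notMem]

/-- The set function `S ↦ E[max_{i ∈ [n]} X i]`, where the `X i` are independent, with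
`X i ~ N(0, σ₀²)` for `i ∈ S` and `X i = 0` for `i ∉ S`, is submodular. -/
theorem expected_max_submodular
    (n : ℕ) (hn : 0 < n) (σ₀ : ℝ) (hσ₀ : 0 < σ₀)
    (f : Finset (Fin n) → ℝ)
    (hf : ∀ S, f S = ∫ x, (⨆ i, x i) ∂(gaussianOnSet n σ₀ S)) :
    ∀ S T : Finset (Fin n), f (S ∪ T) + f (S ∩ T) ≤ f S + f T := by
  intro S T
  by_cases hS : S = Finset.univ
  · subst hS
    rw [Finset.union_eq_left.mpr (Finset.subset_univ T), Finset.univ_inter]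
  by_cases hT : T = Finset.univ
  · subst hT
    rw [Finset.union_eq_right.mpr (Finset.subset_univ S),
      Finset.inter_eq_left.mpr (Finset.subset_univ S)]
    linarith
  set v : ℝ≥0 := Real.toNNReal (σ₀ ^ 2) with hv
  have hv0 : v ≠ 0 := by
    have h2 : (0:ℝ) < σ₀ ^ 2 := by positivity
    exact (Real.toNNReal_pos.mpr h2).ne'
  set μ : Measure (Fin n → ℝ) := Measure.pi fun _ : Fin n => gaussianReal 0 v with hμ
  haveI : IsProbabilityMeasure μ := by rw [hμ]; infer_instance
  -- rewrite f in terms of gmaxAux and the product measure μ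
  have hrw : ∀ U : Finset (Fin n), f U = ∫ x, gmaxAux U x ∂μ := by
    intro U
    rw [hf, gaussianOnSet_eq_mapAux,
      integral_map (measurable_projAux U).aemeasurable
        (Measurable.iSup fun i => measurable_pi_apply i).aestronglyMeasurable]
    rfl
  -- integrability
  have hsum_int : Integrable (fun x : Fin n → ℝ => ∑ i, |x i|) μ := by
    apply integrable_finset_sum
    intro i _
    have hmap := map_eval_piAux (n := n) (gaussianReal 0 v) i
    have hint : Integrable (id : ℝ → ℝ) (μ.map (fun x => x i)) := by
      rw [hμ, hmap]; exact integrable_id_gaussianAux hv0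
    have := (integrable_map_measure (f := fun x : Fin n → ℝ => x i) (g := (id : ℝ → ℝ))
      (μ := μ) measurable_id.aestronglyMeasurable
      (measurable_pi_apply i).aemeasurable).mp hint
    exact this.abs
  have hint : ∀ U : Finset (Fin n), Integrable (gmaxAux U) μ := by
    intro U
    refine hsum_int.mono' (measurable_gmaxAux U).aestronglyMeasurable
      (ae_of_all _ fun x => ?_)
    rw [Real.norm_eq_abs]
    exact abs_gmaxAux_le hn U x
  rw [hrw, hrw, hrw, hrw, ← integral_add (hint _) (hint _), ← integral_add (hint _) (hint _)]
  exact integral_mono ((hint _).add (hint _)) ((hint _).add (hint _))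
    fun x => gmaxAux_submod hn hS hT x
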